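/- Let ℓ be an ordered special length vector of type {n−4,n−3,n−2}. Then the k-th Betti number of the planar polygon space M_ℓ satisfies b₁(M_ℓ) = n+3 and b₂(M_ℓ) = C(n−5,2) + 8(n−5) + 1, using Walker's formula b_k(M_ℓ) = |Ṡ_k(ℓ)| + |Ṡ_{n−3−k}(ℓ)|. -/

import Mathlib

open Finset

/-- The sum of `ℓ` over `J` is less than the sum over the complement in `{1,…,n}`. -/
def Short (n : ℕ) (ℓ : ℕ → ℝ) (J : Finset ℕ) : Prop :=
  ∑ j ∈ J, ℓ j < ∑ j ∈ Finset.Icc 1 n \ J, ℓ j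

/-- `J` is long iff its complement in `{1,…,n}` is short. -/
def Long (n : ℕ) (ℓ : ℕ → ℝ) (J : Finset ℕ) : Prop :=
  Short n ℓ (Finset.Icc 1 n \ J)

/-- All entries positive. -/
def LengthVec (n : ℕ) (ℓ : ℕ → ℝ) : Prop := ∀ i ∈ Finset.Icc 1 n, 0 < ℓ i

/-- `ℓ₁ ≤ … ≤ ℓₙ`. -/
def OrderedVec (n : ℕ) (ℓ : ℕ → ℝ) : Prop :=
  ∀ i j : ℕ, 1 ≤ i → i ≤ j → j ≤ n → ℓ i ≤ ℓ j

/-- No subset has sum equal to the sum of its complement. -/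
def Generic (n : ℕ) (ℓ : ℕ → ℝ) : Prop :=
  ∀ J ⊆ Finset.Icc 1 n, ∑ j ∈ J, ℓ j ≠ ∑ j ∈ Finset.Icc 1 n \ J, ℓ j

/-- Dominance order: an injective order-preserving map `φ : J₁ → J₂` with `x ≤ φ x`. -/
def DomLe (J₁ J₂ : Finset ℕ) : Prop :=
  ∃ φ : ℕ → ℕ, Set.InjOn φ ↑J₁ ∧ (∀ x ∈ J₁, φ x ∈ J₂) ∧
    (∀ x ∈ J₁, ∀ y ∈ J₁, x < y → φ x < φ y) ∧ ∀ x ∈ J₁, x ≤ φ x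

/-- `Ṡ_k(ℓ)`: subsets `J ⊆ {1,…,n−1}` of cardinality `k` with `J ∪ {n}` short. -/
def SdotSet (n : ℕ) (ℓ : ℕ → ℝ) (k : ℕ) : Set (Finset ℕ) :=
  {J | J ⊆ Finset.Icc 1 (n-1) ∧ J.card = k ∧ Short n ℓ (insert n J)}

/-- `Ṡ(ℓ)`: subsets `J ⊆ {1,…,n−1}` with `J ∪ {n}` short. -/
def Sdot (n : ℕ) (ℓ : ℕ → ℝ) : Set (Finset ℕ) :=
  {J | J ⊆ Finset.Icc 1 (n-1) ∧ Short n ℓ (insert n J)}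

/-- Special: `Ṡ_{n−3}(ℓ) = ∅ ≠ Ṡ_{n−4}(ℓ)`. -/
def SpecialVec (n : ℕ) (ℓ : ℕ → ℝ) : Prop :=
  SdotSet n ℓ (n-3) = ∅ ∧ SdotSet n ℓ (n-4) ≠ ∅

/-- `T` is the type of `ℓ`: the minimal three-element long subset of `{1,…,n−1}`. -/
def IsType (n : ℕ) (ℓ : ℕ → ℝ) (T : Finset ℕ) : Prop :=
  T ⊆ Finset.Icc 1 (n-1) ∧ T.card = 3 ∧ Long n ℓ T ∧
    ∀ T' ⊆ Finset.Icc 1 (n-1), T'.card = 3 → Long n ℓ T' → DomLe T T'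

/- ----------------- auxiliary material ----------------- -/

private def TopF (m : ℕ) : Finset ℕ := {m+1, m+2, m+3, m+4}

private lemma mem_TopF {m x : ℕ} : x ∈ TopF m ↔ (m+1 ≤ x ∧ x ≤ m+4) := by
  simp [TopF]; omega

private lemma card_TopF (m : ℕ) : (TopF m).card = 4 := by
  rw [TopF, card_insert_of_notMem (by simp), card_insert_of_notMem (by simp),
    card_insert_of_notMem (by simp), card_singleton]

private lemma sum_TopF (m : ℕ) (ℓ : ℕ → ℝ) :
    ∑ j ∈ TopF m, ℓ j = ℓ (m+1) + ℓ (m+2) + ℓ (m+3) + ℓ (m+4) := by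
  rw [TopF, sum_insert (by simp), sum_insert (by simp), sum_insert (by simp), sum_singleton]
  ring

private lemma sum_T (m : ℕ) (ℓ : ℕ → ℝ) :
    ∑ j ∈ ({m+1, m+2, m+3} : Finset ℕ), ℓ j = ℓ (m+1) + ℓ (m+2) + ℓ (m+3) := by
  rw [show ({m+1, m+2, m+3} : Finset ℕ) = insert (m+1) {m+2, m+3} from rfl,
    sum_insert (by simp), sum_insert (by simp), sum_singleton]
  ring

private lemma card_T (m : ℕ) : ({m+1, m+2, m+3} : Finset ℕ).card = 3 := by
  rw [show ({m+1, m+2, m+3} : Finset ℕ) = insert (m+1) {m+2, m+3} from rfl,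
    card_insert_of_notMem (by simp), card_insert_of_notMem (by simp), card_singleton]

private lemma short_iff (m : ℕ) (ℓ : ℕ → ℝ) (A : Finset ℕ) (hA : A ⊆ Finset.Icc 1 (m+5)) :
    Short (m+5) ℓ A ↔ 2 * ∑ j ∈ A, ℓ j < ∑ j ∈ Finset.Icc 1 (m+5), ℓ j := by
  have h := Finset.sum_sdiff (f := ℓ) hA
  unfold Short
  constructor <;> intro <;> linarith

section main
variable {m : ℕ} {ℓ : ℕ → ℝ}

private lemma II' (m : ℕ) : Finset.Icc 1 (m+4) ⊆ Finset.Icc 1 (m+5) :=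
  Finset.Icc_subset_Icc_right (by omega)

private lemma TopF_sub (m : ℕ) : TopF m ⊆ Finset.Icc 1 (m+4) := by
  intro x hx; rw [mem_TopF] at hx; simp [Finset.mem_Icc]; omega

private lemma smono (hpos : LengthVec (m+5) ℓ) {A B : Finset ℕ}
    (hAB : A ⊆ B) (hB : B ⊆ Finset.Icc 1 (m+5)) :
    ∑ j ∈ A, ℓ j ≤ ∑ j ∈ B, ℓ j :=
  Finset.sum_le_sum_of_subset_of_nonneg hAB (fun i hi _ => (hpos i (hB hi)).le)

private lemma ins_sub {J : Finset ℕ} (hJ : J ⊆ Finset.Icc 1 (m+4)) :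
    insert (m+5) J ⊆ Finset.Icc 1 (m+5) := by
  rw [Finset.insert_subset_iff]
  exact ⟨by simp [Finset.mem_Icc], hJ.trans (II' m)⟩

private lemma ins_eq {J : Finset ℕ} (hJ : J ⊆ Finset.Icc 1 (m+4)) :
    insert (m+5) J = Finset.Icc 1 (m+5) \ (Finset.Icc 1 (m+4) \ J) := by
  ext y
  simp only [Finset.mem_insert, Finset.mem_sdiff, Finset.mem_Icc]
  constructor
  · rintro (rfl | hy)
    · exact ⟨⟨by omega, le_refl _⟩, fun h => by omega⟩
    · have hb := Finset.mem_Icc.mp (hJ hy)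
      exact ⟨⟨hb.1, by omega⟩, fun h => h.2 hy⟩
  · rintro ⟨⟨h1, h2⟩, h3⟩
    by_cases hy : y ∈ J
    · exact Or.inr hy
    · left
      by_contra hne
      exact h3 ⟨⟨h1, by omega⟩, hy⟩

/-- every 3-element subset of the top four is long -/
private lemma long3 (hord : OrderedVec (m+5) ℓ)
    (hTlong : ∑ j ∈ Finset.Icc 1 (m+5), ℓ j < 2 * (ℓ (m+1) + ℓ (m+2) + ℓ (m+3)))
    {L : Finset ℕ} (hL : L ⊆ TopF m) (hLc : L.card = 3) :
    ∑ j ∈ Finset.Icc 1 (m+5), ℓ j < 2 * ∑ j ∈ L, ℓ j := by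
  have hc : (TopF m \ L).card = 1 := by
    rw [Finset.card_sdiff_of_subset hL, card_TopF, hLc]
  obtain ⟨x, hx⟩ := Finset.card_eq_one.mp hc
  have hxT : x ∈ TopF m := by
    have : x ∈ TopF m \ L := by rw [hx]; exact Finset.mem_singleton_self x
    exact (Finset.mem_sdiff.mp this).1
  have hxb := mem_TopF.mp hxT
  have hsum : ∑ j ∈ TopF m \ L, ℓ j + ∑ j ∈ L, ℓ j = ∑ j ∈ TopF m, ℓ j :=
    Finset.sum_sdiff hL
  rw [hx, Finset.sum_singleton, sum_TopF] at hsum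
  have hx4 : ℓ x ≤ ℓ (m+4) := hord x (m+4) (by omega) (by omega) (by omega)
  linarith

/-- main "short" lemma: at most one top element ⇒ J ∪ {n} is short. -/
private lemma lemA (hpos : LengthVec (m+5) ℓ) (hord : OrderedVec (m+5) ℓ)
    (hTlong : ∑ j ∈ Finset.Icc 1 (m+5), ℓ j < 2 * (ℓ (m+1) + ℓ (m+2) + ℓ (m+3)))
    {J : Finset ℕ} (hJ : J ⊆ Finset.Icc 1 (m+4)) (hJT : (J ∩ TopF m).card ≤ 1) :
    Short (m+5) ℓ (insert (m+5) J) := by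
  rw [short_iff m ℓ _ (ins_sub hJ)]
  have hci : (TopF m \ J).card + (TopF m ∩ J).card = (TopF m).card :=
    Finset.card_sdiff_add_card_inter _ _
  rw [card_TopF] at hci
  rw [Finset.inter_comm] at hJT
  obtain ⟨L, hLsub, hLc⟩ := Finset.exists_subset_card_eq (by omega : 3 ≤ (TopF m \ J).card)
  have hLlong := long3 hord hTlong (hLsub.trans (Finset.sdiff_subset)) hLc
  have hLK : L ⊆ Finset.Icc 1 (m+4) \ J :=
    hLsub.trans (Finset.sdiff_subset_sdiff (TopF_sub m) (le_refl _))
  have hKI : Finset.Icc 1 (m+4) \ J ⊆ Finset.Icc 1 (m+5) :=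
    (Finset.sdiff_subset).trans (II' m)
  have h1 : ∑ j ∈ L, ℓ j ≤ ∑ j ∈ Finset.Icc 1 (m+4) \ J, ℓ j := smono hpos hLK hKI
  have h2 : ∑ j ∈ Finset.Icc 1 (m+5) \ (Finset.Icc 1 (m+4) \ J), ℓ j
      + ∑ j ∈ Finset.Icc 1 (m+4) \ J, ℓ j = ∑ j ∈ Finset.Icc 1 (m+5), ℓ j :=
    Finset.sum_sdiff hKI
  rw [ins_eq hJ]
  linarith

/-- main "long" lemma: at least two top elements ⇒ J ∪ {n} is long. -/
private lemma lemB (hpos : LengthVec (m+5) ℓ) (hord : OrderedVec (m+5) ℓ)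
    (hTlong : ∑ j ∈ Finset.Icc 1 (m+5), ℓ j < 2 * (ℓ (m+1) + ℓ (m+2) + ℓ (m+3)))
    {J : Finset ℕ} (hJ : J ⊆ Finset.Icc 1 (m+4)) (hJT : 2 ≤ (J ∩ TopF m).card) :
    ¬ Short (m+5) ℓ (insert (m+5) J) := by
  intro hshort
  rw [short_iff m ℓ _ (ins_sub hJ)] at hshort
  have key : ∀ a b : ℕ, a ∈ J ∩ TopF m → b ∈ J ∩ TopF m → a < b → False := by
    intro a b ha hb hab
    obtain ⟨haJ, haT⟩ := Finset.mem_inter.mp ha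
    obtain ⟨hbJ, hbT⟩ := Finset.mem_inter.mp hb
    have hat := mem_TopF.mp haT
    have hbt := mem_TopF.mp hbT
    have hsub : ({a, b, m+5} : Finset ℕ) ⊆ insert (m+5) J := by
      intro y hy
      simp only [Finset.mem_insert, Finset.mem_singleton] at hy
      rcases hy with rfl | rfl | rfl
      · exact Finset.mem_insert_of_mem haJ
      · exact Finset.mem_insert_of_mem hbJ
      · exact Finset.mem_insert_self _ _
    have hsum : ∑ j ∈ ({a, b, m+5} : Finset ℕ), ℓ j = ℓ a + ℓ b + ℓ (m+5) := by
      rw [show ({a, b, m+5} : Finset ℕ) = insert a {b, m+5} from rfl,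
        Finset.sum_insert (by simp; omega), Finset.sum_insert (by simp; omega),
        Finset.sum_singleton]
      ring
    have h1 : ℓ (m+1) ≤ ℓ a := hord (m+1) a (by omega) (by omega) (by omega)
    have h2 : ℓ (m+2) ≤ ℓ b := hord (m+2) b (by omega) (by omega) (by omega)
    have h3 : ℓ (m+3) ≤ ℓ (m+5) := hord (m+3) (m+5) (by omega) (by omega) (by omega)
    have hmono := smono hpos hsub (ins_sub hJ)
    rw [hsum] at hmono
    linarith
  obtain ⟨a, ha, b, hb, hne⟩ := Finset.one_lt_card.mp (by omega : 1 < (J ∩ TopF m).card)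
  rcases hne.lt_or_gt with h | h
  · exact key a b ha hb h
  · exact key b a hb ha h

/-- a long 3-subset of {1,…,n−1} has all elements ≥ m+1 (from type minimality). -/
private lemma lemMin (hmin : ∀ T' ⊆ Finset.Icc 1 (m+4), T'.card = 3 →
      Long (m+5) ℓ T' → DomLe {m+1, m+2, m+3} T')
    {K : Finset ℕ} (hK : K ⊆ Finset.Icc 1 (m+4)) (hKc : K.card = 3)
    (hKlong : ∑ j ∈ Finset.Icc 1 (m+5), ℓ j < 2 * ∑ j ∈ K, ℓ j) :
    ∀ y ∈ K, m+1 ≤ y := by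
  have hKI : K ⊆ Finset.Icc 1 (m+5) := hK.trans (II' m)
  have hlong : Long (m+5) ℓ K := by
    unfold Long
    rw [short_iff m ℓ _ (Finset.sdiff_subset)]
    have h := Finset.sum_sdiff (f := ℓ) hKI
    linarith
  obtain ⟨φ, hinj, hmaps, _, hle⟩ := hmin K hK hKc hlong
  have himg : ({m+1, m+2, m+3} : Finset ℕ).image φ = K := by
    apply Finset.eq_of_subset_of_card_le
    · exact Finset.image_subset_iff.mpr hmaps
    · rw [Finset.card_image_of_injOn hinj, card_T, hKc]
  intro y hy
  rw [← himg] at hy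
  obtain ⟨x, hx, rfl⟩ := Finset.mem_image.mp hy
  have hx1 : m+1 ≤ x := by
    simp only [Finset.mem_insert, Finset.mem_singleton] at hx
    omega
  exact hx1.trans (hle x hx)

end main


/-- Betti numbers b₁ and b₂ of the planar polygon space for type
{n−4,n−3,n−2}, via Walker's formula b_k = |Ṡ_k(ℓ)| + |Ṡ_{n−3−k}(ℓ)|. -/
theorem betti_low_type (n : ℕ) (ℓ : ℕ → ℝ) (hn : 5 ≤ n)
    (hpos : LengthVec n ℓ) (hord : OrderedVec n ℓ) (hgen : Generic n ℓ)
    (hspec : SpecialVec n ℓ) (hT : IsType n ℓ {n-4, n-3, n-2}) :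
    (SdotSet n ℓ 1).ncard + (SdotSet n ℓ (n-4)).ncard = n + 3 ∧
    (SdotSet n ℓ 2).ncard + (SdotSet n ℓ (n-5)).ncard
      = Nat.choose (n-5) 2 + 8*(n-5) + 1 := by
  obtain ⟨m, rfl⟩ : ∃ m, n = m + 5 := ⟨n - 5, by omega⟩
  clear hn hspec hgen
  rw [show m+5-4 = m+1 by omega, show m+5-3 = m+2 by omega, show m+5-2 = m+3 by omega] at hT
  rw [show m+5-4 = m+1 by omega, show m+5-5 = m by omega]
  obtain ⟨-, -, hTL, hmin⟩ := hT
  rw [show m+5-1 = m+4 by omega] at hmin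
  -- the basic long inequality for the type triple
  have hTlong : ∑ j ∈ Finset.Icc 1 (m+5), ℓ j < 2 * (ℓ (m+1) + ℓ (m+2) + ℓ (m+3)) := by
    have hTsub : ({m+1, m+2, m+3} : Finset ℕ) ⊆ Finset.Icc 1 (m+5) := by
      intro x hx
      simp only [Finset.mem_insert, Finset.mem_singleton] at hx
      simp only [Finset.mem_Icc]
      omega
    unfold Long at hTL
    rw [short_iff m ℓ _ (Finset.sdiff_subset)] at hTL
    have h := Finset.sum_sdiff (f := ℓ) hTsub
    rw [sum_T] at h
    linarith
  -- unfolded membership in SdotSet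
  have hmem : ∀ k : ℕ, ∀ J : Finset ℕ, J ∈ SdotSet (m+5) ℓ k ↔
      (J ⊆ Finset.Icc 1 (m+4) ∧ J.card = k ∧ Short (m+5) ℓ (insert (m+5) J)) := by
    intro k J
    unfold SdotSet
    rw [show m+5-1 = m+4 by omega]
    exact Iff.rfl
  -- ============ Ṡ₁ ============
  have E1 : SdotSet (m+5) ℓ 1 = ↑((Finset.Icc 1 (m+4)).image (fun i => ({i} : Finset ℕ))) := by
    ext J
    rw [hmem, Finset.mem_coe]
    constructor
    · rintro ⟨hsub, hcard, -⟩
      obtain ⟨i, rfl⟩ := Finset.card_eq_one.mp hcard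
      exact Finset.mem_image.mpr ⟨i, hsub (Finset.mem_singleton_self i), rfl⟩
    · intro hJ
      obtain ⟨i, hi, rfl⟩ := Finset.mem_image.mp hJ
      refine ⟨Finset.singleton_subset_iff.mpr hi, Finset.card_singleton i, ?_⟩
      apply lemA hpos hord hTlong (Finset.singleton_subset_iff.mpr hi)
      calc ({i} ∩ TopF m).card ≤ ({i} : Finset ℕ).card :=
            Finset.card_le_card Finset.inter_subset_left
        _ = 1 := rfl
  have C1 : ((Finset.Icc 1 (m+4)).image (fun i => ({i} : Finset ℕ))).card = m + 4 := by
    rw [Finset.card_image_of_injective _ Finset.singleton_injective, Nat.card_Icc]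
    omega
  -- ============ Ṡ_{n-4} ============
  have E3 : SdotSet (m+5) ℓ (m+1)
      = ↑((TopF m).image (fun x => insert x (Finset.Icc 1 m))) := by
    ext J
    rw [hmem, Finset.mem_coe]
    constructor
    · rintro ⟨hsub, hcard, hshort⟩
      have hKc : (Finset.Icc 1 (m+4) \ J).card = 3 := by
        rw [Finset.card_sdiff_of_subset hsub, hcard, Nat.card_Icc]
        omega
      have hKlong : ∑ j ∈ Finset.Icc 1 (m+5), ℓ j
          < 2 * ∑ j ∈ Finset.Icc 1 (m+4) \ J, ℓ j := by
        rw [short_iff m ℓ _ (ins_sub hsub), ins_eq hsub] at hshort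
        have hKI : Finset.Icc 1 (m+4) \ J ⊆ Finset.Icc 1 (m+5) :=
          Finset.sdiff_subset.trans (II' m)
        have h := Finset.sum_sdiff (f := ℓ) hKI
        linarith
      have hge := lemMin hmin Finset.sdiff_subset hKc hKlong
      have hIccJ : Finset.Icc 1 m ⊆ J := by
        intro y hy
        have hy' := Finset.mem_Icc.mp hy
        by_contra hyJ
        have hyK : y ∈ Finset.Icc 1 (m+4) \ J :=
          Finset.mem_sdiff.mpr ⟨Finset.mem_Icc.mpr ⟨hy'.1, by omega⟩, hyJ⟩
        have := hge y hyK
        omega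
      have hdc : (J \ Finset.Icc 1 m).card = 1 := by
        rw [Finset.card_sdiff_of_subset hIccJ, hcard, Nat.card_Icc]
        omega
      obtain ⟨x, hx⟩ := Finset.card_eq_one.mp hdc
      have hxJ : x ∈ J \ Finset.Icc 1 m := by rw [hx]; exact Finset.mem_singleton_self x
      obtain ⟨hxJ', hxns⟩ := Finset.mem_sdiff.mp hxJ
      have hxI := Finset.mem_Icc.mp (hsub hxJ')
      have hxm : ¬ (1 ≤ x ∧ x ≤ m) := fun h => hxns (Finset.mem_Icc.mpr h)
      refine Finset.mem_image.mpr ⟨x, mem_TopF.mpr ⟨by omega, hxI.2⟩, ?_⟩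
      have hu := Finset.sdiff_union_of_subset hIccJ
      rw [hx] at hu
      rw [← hu, Finset.insert_eq]
    · intro hJ
      obtain ⟨x, hxT, rfl⟩ := Finset.mem_image.mp hJ
      have hxb := mem_TopF.mp hxT
      have hxn : x ∉ Finset.Icc 1 m := by simp only [Finset.mem_Icc]; omega
      have hsub : insert x (Finset.Icc 1 m) ⊆ Finset.Icc 1 (m+4) := by
        rw [Finset.insert_subset_iff]
        exact ⟨Finset.mem_Icc.mpr ⟨by omega, by omega⟩, Finset.Icc_subset_Icc_right (by omega)⟩
      refine ⟨hsub, ?_, ?_⟩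
      · rw [Finset.card_insert_of_notMem hxn, Nat.card_Icc]
        omega
      · apply lemA hpos hord hTlong hsub
        have hss : insert x (Finset.Icc 1 m) ∩ TopF m ⊆ {x} := by
          intro y hy
          obtain ⟨hy1, hy2⟩ := Finset.mem_inter.mp hy
          have hyb := mem_TopF.mp hy2
          rcases Finset.mem_insert.mp hy1 with rfl | hy3
          · exact Finset.mem_singleton_self _
          · exfalso; have := Finset.mem_Icc.mp hy3; omega
        calc _ ≤ ({x} : Finset ℕ).card := Finset.card_le_card hss
          _ = 1 := rfl
  have C3 : ((TopF m).image (fun x => insert x (Finset.Icc 1 m))).card = 4 := by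
    rw [Finset.card_image_of_injOn, card_TopF]
    intro x hx y hy heq
    simp only [Finset.mem_coe] at hx hy
    simp only at heq
    have hxb := mem_TopF.mp hx
    have : x ∈ insert y (Finset.Icc 1 m) := by rw [← heq]; exact Finset.mem_insert_self _ _
    rcases Finset.mem_insert.mp this with h | h
    · exact h
    · exfalso; have := Finset.mem_Icc.mp h; omega
  -- ============ Ṡ₂ ============
  have E2 : SdotSet (m+5) ℓ 2
      = ↑(((Finset.Icc 1 (m+4)).powersetCard 2).filter (fun J => (J ∩ TopF m).card ≤ 1)) := by
    ext J
    rw [hmem, Finset.mem_coe]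
    simp only [Finset.mem_filter, Finset.mem_powersetCard]
    constructor
    · rintro ⟨hsub, hcard, hshort⟩
      refine ⟨⟨hsub, hcard⟩, ?_⟩
      by_contra h
      exact lemB hpos hord hTlong hsub (by omega) hshort
    · rintro ⟨⟨hsub, hcard⟩, h⟩
      exact ⟨hsub, hcard, lemA hpos hord hTlong hsub h⟩
  have C2 : (((Finset.Icc 1 (m+4)).powersetCard 2).filter
      (fun J => (J ∩ TopF m).card ≤ 1)).card + 6 = (m+4).choose 2 := by
    have hsplit := Finset.card_filter_add_card_filter_not
      (s := (Finset.Icc 1 (m+4)).powersetCard 2) (p := fun J => (J ∩ TopF m).card ≤ 1)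
    have hneg : ((Finset.Icc 1 (m+4)).powersetCard 2).filter
        (fun J => ¬ (J ∩ TopF m).card ≤ 1) = (TopF m).powersetCard 2 := by
      ext J
      simp only [Finset.mem_filter, Finset.mem_powersetCard, not_le]
      constructor
      · rintro ⟨⟨hsub, hcard⟩, h2⟩
        refine ⟨?_, hcard⟩
        have hJeq : J ∩ TopF m = J := by
          apply Finset.eq_of_subset_of_card_le Finset.inter_subset_left
          omega
        rw [← hJeq]
        exact Finset.inter_subset_right
      · rintro ⟨hsub, hcard⟩
        have hJeq : J ∩ TopF m = J := Finset.inter_eq_left.mpr hsub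
        exact ⟨⟨hsub.trans (TopF_sub m), hcard⟩, by rw [hJeq, hcard]; omega⟩
    rw [hneg, Finset.card_powersetCard, Finset.card_powersetCard, card_TopF,
      Nat.card_Icc, show m+4+1-1 = m+4 by omega, show Nat.choose 4 2 = 6 by decide] at hsplit
    exact hsplit
  -- ============ Ṡ_{n-5} ============
  have E4 : SdotSet (m+5) ℓ m
      = ↑(insert (Finset.Icc 1 m) (((TopF m) ×ˢ (Finset.Icc 1 m)).image
          (fun p => insert p.1 (Finset.Icc 1 m \ {p.2})))) := by
    ext J
    rw [hmem, Finset.mem_coe]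
    simp only [Finset.mem_insert, Finset.mem_image, Finset.mem_product]
    constructor
    · rintro ⟨hsub, hcard, hshort⟩
      have hle1 : (J ∩ TopF m).card ≤ 1 := by
        by_contra h
        exact lemB hpos hord hTlong hsub (by omega) hshort
      rcases Nat.lt_or_ge (J ∩ TopF m).card 1 with h0 | h1
      · left
        have hempty : J ∩ TopF m = ∅ := Finset.card_eq_zero.mp (by omega)
        have hJsub : J ⊆ Finset.Icc 1 m := by
          intro y hy
          have hyI := Finset.mem_Icc.mp (hsub hy)
          have hyT : y ∉ TopF m := by
            intro hyT
            have : y ∈ J ∩ TopF m := Finset.mem_inter.mpr ⟨hy, hyT⟩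
            rw [hempty] at this
            exact absurd this (Finset.notMem_empty y)
          rw [mem_TopF] at hyT
          exact Finset.mem_Icc.mpr ⟨hyI.1, by omega⟩
        refine Finset.eq_of_subset_of_card_le hJsub ?_
        rw [Nat.card_Icc, hcard]
        omega
      · right
        have hone : (J ∩ TopF m).card = 1 := le_antisymm hle1 h1
        obtain ⟨x, hx⟩ := Finset.card_eq_one.mp hone
        have hxm : x ∈ J ∩ TopF m := by rw [hx]; exact Finset.mem_singleton_self x
        obtain ⟨hxJ, hxT⟩ := Finset.mem_inter.mp hxm
        have hm1 : 1 ≤ m := by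
          have : 0 < J.card := Finset.card_pos.mpr ⟨x, hxJ⟩
          omega
        have hJ'sub : J.erase x ⊆ Finset.Icc 1 m := by
          intro y hy
          obtain ⟨hyne, hyJ⟩ := Finset.mem_erase.mp hy
          have hyI := Finset.mem_Icc.mp (hsub hyJ)
          have hyT : y ∉ TopF m := by
            intro hyT
            have : y ∈ J ∩ TopF m := Finset.mem_inter.mpr ⟨hyJ, hyT⟩
            rw [hx] at this
            exact hyne (Finset.mem_singleton.mp this)
          rw [mem_TopF] at hyT
          exact Finset.mem_Icc.mpr ⟨hyI.1, by omega⟩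
        have hJ'c : (J.erase x).card = m - 1 := by
          rw [Finset.card_erase_of_mem hxJ, hcard]
        have hdiffc : (Finset.Icc 1 m \ J.erase x).card = 1 := by
          rw [Finset.card_sdiff_of_subset hJ'sub, Nat.card_Icc, hJ'c]
          omega
        obtain ⟨y, hy⟩ := Finset.card_eq_one.mp hdiffc
        have hym : y ∈ Finset.Icc 1 m \ J.erase x := by
          rw [hy]; exact Finset.mem_singleton_self y
        obtain ⟨hyI, hyJ'⟩ := Finset.mem_sdiff.mp hym
        refine ⟨(x, y), ⟨hxT, hyI⟩, ?_⟩
        have hJ'eq : J.erase x = Finset.Icc 1 m \ {y} := by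
          apply Finset.eq_of_subset_of_card_le
          · intro z hz
            refine Finset.mem_sdiff.mpr ⟨hJ'sub hz, ?_⟩
            intro hzy
            rw [Finset.mem_singleton] at hzy
            subst hzy
            exact hyJ' hz
          · rw [Finset.card_sdiff_of_subset (Finset.singleton_subset_iff.mpr hyI), Nat.card_Icc,
              Finset.card_singleton, hJ'c]
            omega
        show insert x (Finset.Icc 1 m \ {y}) = J
        rw [← hJ'eq]
        exact Finset.insert_erase hxJ
    · rintro (rfl | ⟨⟨x, y⟩, ⟨hxT, hyI⟩, rfl⟩)
      · refine ⟨Finset.Icc_subset_Icc_right (by omega), by rw [Nat.card_Icc]; omega, ?_⟩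
        apply lemA hpos hord hTlong (Finset.Icc_subset_Icc_right (by omega))
        have hie : Finset.Icc 1 m ∩ TopF m = ∅ := by
          ext z
          simp only [Finset.mem_inter, Finset.mem_Icc, mem_TopF, Finset.notMem_empty,
            iff_false, not_and]
          omega
        rw [hie]
        simp
      · have hxb := mem_TopF.mp hxT
        have hyb := Finset.mem_Icc.mp hyI
        have hxn : x ∉ Finset.Icc 1 m \ {y} := by
          intro h
          have := Finset.mem_Icc.mp (Finset.mem_sdiff.mp h).1
          omega
        have hsub : insert x (Finset.Icc 1 m \ {y}) ⊆ Finset.Icc 1 (m+4) := by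
          rw [Finset.insert_subset_iff]
          exact ⟨Finset.mem_Icc.mpr ⟨by omega, by omega⟩,
            Finset.sdiff_subset.trans (Finset.Icc_subset_Icc_right (by omega))⟩
        refine ⟨hsub, ?_, ?_⟩
        · rw [Finset.card_insert_of_notMem hxn,
            Finset.card_sdiff_of_subset (Finset.singleton_subset_iff.mpr hyI), Nat.card_Icc,
            Finset.card_singleton]
          omega
        · apply lemA hpos hord hTlong hsub
          have hss : insert x (Finset.Icc 1 m \ {y}) ∩ TopF m ⊆ {x} := by
            intro z hz
            obtain ⟨hz1, hz2⟩ := Finset.mem_inter.mp hz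
            have hzb := mem_TopF.mp hz2
            rcases Finset.mem_insert.mp hz1 with rfl | hz3
            · exact Finset.mem_singleton_self _
            · exfalso
              have := Finset.mem_Icc.mp (Finset.mem_sdiff.mp hz3).1
              omega
          calc _ ≤ ({x} : Finset ℕ).card := Finset.card_le_card hss
            _ = 1 := rfl
  have C4 : (insert (Finset.Icc 1 m) (((TopF m) ×ˢ (Finset.Icc 1 m)).image
      (fun p => insert p.1 (Finset.Icc 1 m \ {p.2})))).card = 4 * m + 1 := by
    have hinj : Set.InjOn (fun p : ℕ × ℕ => insert p.1 (Finset.Icc 1 m \ {p.2}))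
        ↑((TopF m) ×ˢ (Finset.Icc 1 m)) := by
      rintro ⟨x1, y1⟩ h1 ⟨x2, y2⟩ h2 heq
      simp only [Finset.coe_product, Set.mem_prod, Finset.mem_coe] at h1 h2
      have hx1 := mem_TopF.mp h1.1
      have hy1 := Finset.mem_Icc.mp h1.2
      have hx2 := mem_TopF.mp h2.1
      have hy2 := Finset.mem_Icc.mp h2.2
      simp only at heq
      have hxx : x1 = x2 := by
        have hmem' : x1 ∈ insert x2 (Finset.Icc 1 m \ {y2}) := by
          rw [← heq]; exact Finset.mem_insert_self _ _
        rcases Finset.mem_insert.mp hmem' with h | h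
        · exact h
        · exfalso
          have := Finset.mem_Icc.mp (Finset.mem_sdiff.mp h).1
          omega
      subst hxx
      have hyy : y1 = y2 := by
        by_contra hne
        have hm1 : y1 ∈ insert x1 (Finset.Icc 1 m \ {y2}) :=
          Finset.mem_insert_of_mem (Finset.mem_sdiff.mpr
            ⟨h1.2, by simp only [Finset.mem_singleton]; exact hne⟩)
        rw [← heq] at hm1
        rcases Finset.mem_insert.mp hm1 with h | h
        · omega
        · exact (Finset.mem_sdiff.mp h).2 (Finset.mem_singleton_self y1)
      subst hyy
      rfl
    have hnm : Finset.Icc 1 m ∉ ((TopF m) ×ˢ (Finset.Icc 1 m)).image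
        (fun p => insert p.1 (Finset.Icc 1 m \ {p.2})) := by
      intro h
      obtain ⟨⟨x, y⟩, hmem', heq⟩ := Finset.mem_image.mp h
      obtain ⟨hxT, hyI⟩ := Finset.mem_product.mp hmem'
      have hxb := mem_TopF.mp hxT
      have hxm : x ∈ Finset.Icc 1 m := by
        rw [← heq]; exact Finset.mem_insert_self _ _
      have := Finset.mem_Icc.mp hxm
      omega
    rw [Finset.card_insert_of_notMem hnm, Finset.card_image_of_injOn hinj,
      Finset.card_product, card_TopF, Nat.card_Icc]
    omega
  -- ============ conclusion ============
  constructor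
  · rw [E1, E3, Set.ncard_coe_finset, Set.ncard_coe_finset, C1, C3]
  · rw [E2, E4, Set.ncard_coe_finset, Set.ncard_coe_finset, C4]
    have hC : (m+4).choose 2 = m.choose 2 + (4*m + 6) := by
      have step : ∀ k : ℕ, (k+1).choose 2 = k.choose 2 + k := by
        intro k
        simp [Nat.choose_succ_succ, Nat.choose_one_right]
        omega
      have s1 : (m+4).choose 2 = (m+3).choose 2 + (m+3) := by
        rw [show m+4 = (m+3)+1 by omega]; exact step _
      have s2 : (m+3).choose 2 = (m+2).choose 2 + (m+2) := by
        rw [show m+3 = (m+2)+1 by omega]; exact step _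
      have s3 : (m+2).choose 2 = (m+1).choose 2 + (m+1) := by
        rw [show m+2 = (m+1)+1 by omega]; exact step _
      have s4 : (m+1).choose 2 = m.choose 2 + m := step m
      omega
    omega
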